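/- Let G be a cyclic group of order N, generated by g, and m, N_p integers with N_p dividing N, N_p > 1, and n = N/N_p. Writing ζ = ξ(g) for a generator ξ of the character group, the sum M = -(1/N)·∑_{k=m}^{N-1+m} r(k-m)·ζ^k, where r(x) denotes the residue of x modulo N_p in {0,...,N_p-1}, equals -(ζ^m/N)·(∑_{i=0}^{N_p-1} i ζ^i)·(∑_{ℓ=0}^{n-1} ζ^{N_p ℓ}). In particular, M = 0 when n > 1, and M = ζ^m/(1-ζ) when n = 1. -/
import Mathlib


open Finset

private lemma sum_range_mul' {M : Type*} [AddCommMonoid M] (f : ℕ → M) (Np n : ℕ) :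
    ∑ j ∈ Finset.range (Np * n), f j
      = ∑ ℓ ∈ Finset.range n, ∑ i ∈ Finset.range Np, f (Np * ℓ + i) := by
  induction n with
  | zero => simp
  | succ k ih =>
    rw [Nat.mul_succ, Finset.sum_range_add, ih, Finset.sum_range_succ]

private lemma deriv_geom (x : ℂ) (k : ℕ) :
    (1 - x) * ∑ i ∈ Finset.range k, (i : ℂ) * x ^ i
      = (∑ i ∈ Finset.range k, x ^ i) - 1 - (k : ℂ) * x ^ k + x ^ k := by
  induction k with
  | zero => simp
  | succ j ih =>
    rw [Finset.sum_range_succ, Finset.sum_range_succ (f := fun i => x ^ i), mul_add, ih]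
    push_cast
    ring

/-- With `ζ = exp(2πi/N)`, `Np ∣ N`, `Np > 1`, `n = N/Np`:
`M = -(1/N)·∑_{k=m}^{N-1+m} r(k-m)·ζ^k` factors as
`-(ζ^m/N)·(∑_{i<Np} i ζ^i)·(∑_{ℓ<n} ζ^{Np ℓ})`; it is `0` when `n > 1` and
`ζ^m/(1-ζ)` when `n = 1`.  Here `r(x) = x % Np ∈ {0,…,Np-1}`. -/
theorem lefschetz_local_term (N Np : ℕ) (hN : 2 ≤ N) (hNp : 1 < Np)
    (hdvd : Np ∣ N) (n : ℕ) (hn : n = N / Np) (m : ℤ)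
    (ζ : ℂ) (hζ : ζ = Complex.exp (2 * Real.pi * Complex.I / N))
    (M : ℂ)
    (hM : M = -(1 / (N : ℂ)) * ∑ j ∈ Finset.range N, ((j % Np : ℕ) : ℂ) * ζ ^ (m + j)) :
    M = -(ζ ^ m / (N : ℂ)) * (∑ i ∈ Finset.range Np, (i : ℂ) * ζ ^ i) *
          (∑ ℓ ∈ Finset.range n, ζ ^ (Np * ℓ)) ∧
      (1 < n → M = 0) ∧ (n = 1 → M = ζ ^ m / (1 - ζ)) := by
  have hN0 : (N : ℕ) ≠ 0 := by omega
  have hprim : IsPrimitiveRoot ζ N := hζ ▸ Complex.isPrimitiveRoot_exp N hN0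
  have hζ0 : ζ ≠ 0 := hprim.ne_zero hN0
  have hζN : ζ ^ N = 1 := hprim.pow_eq_one
  have hNmul : N = Np * n := by
    rw [hn, Nat.mul_div_cancel' hdvd]
  -- step 1: factor out ζ^m and split the sum
  have hsplit : ∑ j ∈ Finset.range N, ((j % Np : ℕ) : ℂ) * ζ ^ (m + j)
      = ζ ^ m * ((∑ i ∈ Finset.range Np, (i : ℂ) * ζ ^ i) *
          (∑ ℓ ∈ Finset.range n, ζ ^ (Np * ℓ))) := by
    have h1 : ∀ j : ℕ, ζ ^ (m + (j : ℤ)) = ζ ^ m * ζ ^ j := by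
      intro j
      rw [zpow_add₀ hζ0, zpow_natCast]
    calc ∑ j ∈ Finset.range N, ((j % Np : ℕ) : ℂ) * ζ ^ (m + j)
        = ζ ^ m * ∑ j ∈ Finset.range N, ((j % Np : ℕ) : ℂ) * ζ ^ j := by
          rw [Finset.mul_sum]
          refine Finset.sum_congr rfl fun j _ => ?_
          rw [h1]; ring
      _ = ζ ^ m * ((∑ i ∈ Finset.range Np, (i : ℂ) * ζ ^ i) *
          (∑ ℓ ∈ Finset.range n, ζ ^ (Np * ℓ))) := by
          congr 1
          rw [hNmul, sum_range_mul' (fun j => ((j % Np : ℕ) : ℂ) * ζ ^ j) Np n,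
            Finset.sum_mul_sum]
          rw [Finset.sum_comm]
          refine Finset.sum_congr rfl fun i hi => Finset.sum_congr rfl fun ℓ _ => ?_
          have hi' : i < Np := Finset.mem_range.mp hi
          have hmod : (Np * ℓ + i) % Np = i := by
            rw [add_comm, Nat.add_mul_mod_self_left, Nat.mod_eq_of_lt hi']
          rw [hmod, pow_add]
          ring
  have hMfact : M = -(ζ ^ m / (N : ℂ)) * (∑ i ∈ Finset.range Np, (i : ℂ) * ζ ^ i) *
      (∑ ℓ ∈ Finset.range n, ζ ^ (Np * ℓ)) := by
    rw [hM, hsplit]; ring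
  refine ⟨hMfact, ?_, ?_⟩
  · -- n > 1 : the geometric factor vanishes
    intro hn1
    have hNpltN : Np < N := by
      rw [hNmul]; nlinarith
    have hne1 : ζ ^ Np ≠ 1 := hprim.pow_ne_one_of_pos_of_lt (by omega) hNpltN
    have hgeom : ∑ ℓ ∈ Finset.range n, ζ ^ (Np * ℓ) = 0 := by
      have h2 : ∑ ℓ ∈ Finset.range n, ζ ^ (Np * ℓ) = ∑ ℓ ∈ Finset.range n, (ζ ^ Np) ^ ℓ := by
        simp [pow_mul]
      rw [h2, geom_sum_eq hne1, ← pow_mul, ← hNmul, hζN]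
      simp
    rw [hMfact, hgeom, mul_zero]
  · -- n = 1 : N = Np, M = ζ^m/(1-ζ)
    intro hn1
    subst hn1
    have hNNp : N = Np := by omega
    subst hNNp
    have hζne1 : ζ ≠ 1 := hprim.ne_one hN
    have hgeom0 : ∑ i ∈ Finset.range N, ζ ^ i = 0 := hprim.geom_sum_eq_zero hN
    have hS : ∑ i ∈ Finset.range N, (i : ℂ) * ζ ^ i = -(N : ℂ) / (1 - ζ) := by
      have h := deriv_geom ζ N
      rw [hgeom0, hζN] at h
      have h1ζ : (1 : ℂ) - ζ ≠ 0 := sub_ne_zero.mpr (Ne.symm hζne1)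
      field_simp at h ⊢
      linear_combination h
    have hNC : (N : ℂ) ≠ 0 := Nat.cast_ne_zero.mpr hN0
    have h1ζ : (1 : ℂ) - ζ ≠ 0 := sub_ne_zero.mpr (Ne.symm hζne1)
    rw [hMfact, hS]
    simp only [Finset.range_one, Finset.sum_singleton, mul_zero, pow_zero]
    field_simp
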